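/- Let H₁ and H be finite-dimensional complex Hilbert spaces and let ρ : H₁ ⊗ H ⊗ H* → ℂ be a linear map, where H* is the dual space of H. Fix an orthonormal basis (ζ_l) of H with dual basis (ζ_l^*), and define ρ₁ : H₁ → ℂ by ρ₁(ψ) = Σ_l ρ(ψ ⊗ ζ_l ⊗ ζ_l^*). For a linear functional f on a finite-dimensional Hilbert space K and an operator T on K define A_f(T) := Σ_k conj(f(e_k)) f(T e_k) over an orthonormal basis (e_k) of K (this is independent of the basis). Then for every self-adjoint operator σ on H₁ and every orthonormal basis (ξ_j) of the real Hilbert space of self-adjoint operators on H with the Hilbert–Schmidt inner product ⟨A, B⟩ = tr(AB), one has A_{ρ₁}(σ) = Σ_j A_ρ(σ ⊗ ξ_j ⊗ ξ_j'), where ξ_j' denotes the dual (transpose) operator of ξ_j acting on H*. -/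

import Mathlib

open scoped ComplexInnerProductSpace

set_option linter.unusedSectionVars false
set_option linter.unusedVariables false

namespace Stmt13Aux

open LinearMap ComplexStarModule


variable {H : Type*} [NormedAddCommGroup H] [InnerProductSpace ℂ H] [FiniteDimensional ℂ H]
variable {ι : Type*} [Fintype ι] (ζ : OrthonormalBasis ι ℂ H)
variable {J : Type*} [Fintype J] [DecidableEq J] (ξ : J → (H →ₗ[ℂ] H))

lemma parseval_symm
    (hortho : ∀ j j' : J, trace ℂ H (ξ j ∘ₗ ξ j') = if j = j' then (1 : ℂ) else 0)
    (hspan : ∀ T : H →ₗ[ℂ] H, T.IsSymmetric → T ∈ Submodule.span ℝ (Set.range ξ))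
    (S T : H →ₗ[ℂ] H) (hS : S.IsSymmetric) (hT : T.IsSymmetric) :
    ∑ j, trace ℂ H (ξ j ∘ₗ S) * trace ℂ H (ξ j ∘ₗ T) = trace ℂ H (S ∘ₗ T) := by
  obtain ⟨c, hc⟩ := (Submodule.mem_span_range_iff_exists_fun ℝ).mp (hspan T hT)
  have hcomp : ∀ f : H →ₗ[ℂ] H, f ∘ₗ T = ∑ j, c j • (f ∘ₗ ξ j) := by
    intro f
    ext x
    rw [← hc]
    simp [Finset.smul_sum, map_sum, LinearMap.map_smul_of_tower]
  have htr : ∀ f : H →ₗ[ℂ] H, trace ℂ H (f ∘ₗ T) = ∑ j, (c j : ℂ) * trace ℂ H (f ∘ₗ ξ j) := by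
    intro f
    rw [hcomp f, map_sum]
    congr 1; ext j
    rw [LinearMap.map_smul_of_tower, Complex.real_smul]
  have hcoef : ∀ j', trace ℂ H (ξ j' ∘ₗ T) = (c j' : ℂ) := by
    intro j'
    rw [htr]
    simp [hortho]
  calc ∑ j, trace ℂ H (ξ j ∘ₗ S) * trace ℂ H (ξ j ∘ₗ T)
      = ∑ j, (c j : ℂ) * trace ℂ H (S ∘ₗ ξ j) := by
        refine Finset.sum_congr rfl fun j _ => ?_
        rw [hcoef, trace_comp_comm', mul_comm]
    _ = trace ℂ H (S ∘ₗ T) := (htr S).symm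

lemma decomp_symm (T : H →ₗ[ℂ] H) :
    ∃ T₁ T₂ : H →ₗ[ℂ] H, T₁.IsSymmetric ∧ T₂.IsSymmetric ∧ T = T₁ + Complex.I • T₂ := by
  refine ⟨ℜ T, ℑ T, ?_, ?_, (realPart_add_I_smul_imaginaryPart T).symm⟩
  · exact (LinearMap.isSymmetric_iff_isSelfAdjoint _).mpr (ℜ T).2
  · exact (LinearMap.isSymmetric_iff_isSelfAdjoint _).mpr (ℑ T).2

lemma parseval_right
    (hortho : ∀ j j' : J, trace ℂ H (ξ j ∘ₗ ξ j') = if j = j' then (1 : ℂ) else 0)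
    (hspan : ∀ T : H →ₗ[ℂ] H, T.IsSymmetric → T ∈ Submodule.span ℝ (Set.range ξ))
    (S T : H →ₗ[ℂ] H) (hS : S.IsSymmetric) :
    ∑ j, trace ℂ H (ξ j ∘ₗ S) * trace ℂ H (ξ j ∘ₗ T) = trace ℂ H (S ∘ₗ T) := by
  obtain ⟨T₁, T₂, h₁, h₂, rfl⟩ := decomp_symm T
  have e1 := parseval_symm ξ hortho hspan S T₁ hS h₁
  have e2 := parseval_symm ξ hortho hspan S T₂ hS h₂
  simp only [comp_add, comp_smul, map_add, map_smul, smul_eq_mul]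
  rw [← e1, ← e2, Finset.mul_sum, ← Finset.sum_add_distrib]
  exact Finset.sum_congr rfl fun j _ => by ring

lemma parseval_all
    (hortho : ∀ j j' : J, trace ℂ H (ξ j ∘ₗ ξ j') = if j = j' then (1 : ℂ) else 0)
    (hspan : ∀ T : H →ₗ[ℂ] H, T.IsSymmetric → T ∈ Submodule.span ℝ (Set.range ξ))
    (S T : H →ₗ[ℂ] H) :
    ∑ j, trace ℂ H (ξ j ∘ₗ S) * trace ℂ H (ξ j ∘ₗ T) = trace ℂ H (S ∘ₗ T) := by
  obtain ⟨S₁, S₂, h₁, h₂, rfl⟩ := decomp_symm S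
  have e1 := parseval_right ξ hortho hspan S₁ T h₁
  have e2 := parseval_right ξ hortho hspan S₂ T h₂
  simp only [comp_add, add_comp, smul_comp, comp_smul, map_add, map_smul, smul_eq_mul]
  rw [← e1, ← e2, Finset.mul_sum, ← Finset.sum_add_distrib]
  exact Finset.sum_congr rfl fun j _ => by ring

lemma trace_onb' (f : H →ₗ[ℂ] H) :
    LinearMap.trace ℂ H f = ∑ l, ⟪ζ l, f (ζ l)⟫ := by
  classical
  rw [LinearMap.trace_eq_matrix_trace ℂ ζ.toBasis f]
  simp [Matrix.trace, Matrix.diag, LinearMap.toMatrix_apply, OrthonormalBasis.coe_toBasis,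
    OrthonormalBasis.coe_toBasis_repr_apply, OrthonormalBasis.repr_apply_apply]

noncomputable def rk (p a : ι) : H →ₗ[ℂ] H :=
  ((innerSL ℂ (ζ p)).toLinearMap).smulRight (ζ a)

lemma trace_comp_rk [DecidableEq ι] (f : H →ₗ[ℂ] H) (p a : ι) :
    LinearMap.trace ℂ H (f ∘ₗ rk ζ p a) = ⟪ζ p, f (ζ a)⟫ := by
  rw [trace_onb' ζ]
  simp only [LinearMap.comp_apply, rk, LinearMap.smulRight_apply,
    ContinuousLinearMap.coe_coe, innerSL_apply_apply, map_smul, inner_smul_right]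
  simp [orthonormal_iff_ite.mp ζ.orthonormal]

lemma completeness [DecidableEq ι]
    (hortho : ∀ j j' : J, trace ℂ H (ξ j ∘ₗ ξ j') = if j = j' then (1 : ℂ) else 0)
    (hspan : ∀ T : H →ₗ[ℂ] H, T.IsSymmetric → T ∈ Submodule.span ℝ (Set.range ξ))
    (p a q b : ι) :
    ∑ j, ⟪ζ p, ξ j (ζ a)⟫ * ⟪ζ b, ξ j (ζ q)⟫ =
      (if p = q then (1 : ℂ) else 0) * (if a = b then (1 : ℂ) else 0) := by
  have h := parseval_all ξ hortho hspan (rk ζ p a) (rk ζ b q)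
  simp only [trace_comp_rk ζ] at h
  rw [h]
  simp only [rk, LinearMap.smulRight_apply, ContinuousLinearMap.coe_coe, innerSL_apply_apply,
    inner_smul_right]
  simp [orthonormal_iff_ite.mp ζ.orthonormal, eq_comm]

lemma sum_comm5 {α β γ δ ε M : Type*} [AddCommMonoid M]
    [Fintype α] [Fintype β] [Fintype γ] [Fintype δ] [Fintype ε]
    (f : α → β → γ → δ → ε → M) :
    ∑ j, ∑ a, ∑ b, ∑ p, ∑ q, f j a b p q = ∑ a, ∑ b, ∑ p, ∑ q, ∑ j, f j a b p q := by
  rw [Finset.sum_comm]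
  refine Finset.sum_congr rfl fun a _ => ?_
  rw [Finset.sum_comm]
  refine Finset.sum_congr rfl fun b _ => ?_
  rw [Finset.sum_comm]
  refine Finset.sum_congr rfl fun p _ => ?_
  rw [Finset.sum_comm]

lemma expand_rho {H₁ : Type*} [NormedAddCommGroup H₁] [InnerProductSpace ℂ H₁]
    (ρ : H₁ →ₗ[ℂ] H →ₗ[ℂ] (H →ₛₗ[starRingEnd ℂ] ℂ)) (v : H₁) (x y : H) :
    ρ v x y = ∑ p, ∑ q, ⟪ζ p, x⟫ * (starRingEnd ℂ) ⟪ζ q, y⟫ * ρ v (ζ p) (ζ q) := by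
  conv_lhs => rw [← ζ.sum_repr' x, ← ζ.sum_repr' y]
  simp only [map_sum, map_smul, map_smulₛₗ, LinearMap.sum_apply, LinearMap.smul_apply,
    smul_eq_mul, Finset.mul_sum]
  rw [show (∑ x_1 : ι, ∑ i : ι, (starRingEnd ℂ) (inner ℂ (ζ x_1) y) * (inner ℂ (ζ i) x * ((ρ v) (ζ i)) (ζ x_1)))
      = ∑ i : ι, ∑ x_1 : ι, (starRingEnd ℂ) (inner ℂ (ζ x_1) y) * (inner ℂ (ζ i) x * ((ρ v) (ζ i)) (ζ x_1)) from
    Finset.sum_comm]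
  refine Finset.sum_congr rfl fun p _ => Finset.sum_congr rfl fun q _ => by ring

lemma perk [DecidableEq ι] {H₁ : Type*} [NormedAddCommGroup H₁] [InnerProductSpace ℂ H₁]
    (ρ : H₁ →ₗ[ℂ] H →ₗ[ℂ] (H →ₛₗ[starRingEnd ℂ] ℂ))
    (hξsa : ∀ j, (ξ j).IsSymmetric)
    (hortho : ∀ j j' : J, trace ℂ H (ξ j ∘ₗ ξ j') = if j = j' then (1 : ℂ) else 0)
    (hspan : ∀ T : H →ₗ[ℂ] H, T.IsSymmetric → T ∈ Submodule.span ℝ (Set.range ξ))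
    (u v : H₁) :
    (starRingEnd ℂ) (∑ l, ρ u (ζ l) (ζ l)) * (∑ l, ρ v (ζ l) (ζ l)) =
      ∑ j, ∑ a, ∑ b, (starRingEnd ℂ) (ρ u (ζ a) (ζ b)) * ρ v (ξ j (ζ a)) (ξ j (ζ b)) := by
  have hX : ∀ (j : J) (q b : ι),
      (starRingEnd ℂ) ⟪ζ q, ξ j (ζ b)⟫ = ⟪ζ b, ξ j (ζ q)⟫ := by
    intro j q b
    rw [inner_conj_symm, hξsa j]
  symm
  calc
    ∑ j, ∑ a, ∑ b, (starRingEnd ℂ) (ρ u (ζ a) (ζ b)) * ρ v (ξ j (ζ a)) (ξ j (ζ b))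
        = ∑ j, ∑ a, ∑ b, ∑ p, ∑ q,
            (⟪ζ p, ξ j (ζ a)⟫ * ⟪ζ b, ξ j (ζ q)⟫) *
              ((starRingEnd ℂ) (ρ u (ζ a) (ζ b)) * ρ v (ζ p) (ζ q)) := by
        refine Finset.sum_congr rfl fun j _ => Finset.sum_congr rfl fun a _ =>
          Finset.sum_congr rfl fun b _ => ?_
        rw [expand_rho ζ ρ v (ξ j (ζ a)) (ξ j (ζ b)), Finset.mul_sum]
        refine Finset.sum_congr rfl fun p _ => ?_
        rw [Finset.mul_sum]
        refine Finset.sum_congr rfl fun q _ => ?_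
        rw [hX j q b]
        ring
    _ = ∑ a, ∑ b, ∑ p, ∑ q, ∑ j,
            (⟪ζ p, ξ j (ζ a)⟫ * ⟪ζ b, ξ j (ζ q)⟫) *
              ((starRingEnd ℂ) (ρ u (ζ a) (ζ b)) * ρ v (ζ p) (ζ q)) := sum_comm5 _
    _ = ∑ a, ∑ b, ∑ p, ∑ q,
            (∑ j, ⟪ζ p, ξ j (ζ a)⟫ * ⟪ζ b, ξ j (ζ q)⟫) *
              ((starRingEnd ℂ) (ρ u (ζ a) (ζ b)) * ρ v (ζ p) (ζ q)) := by
        simp only [Finset.sum_mul]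
    _ = ∑ a, ∑ b, ∑ p, ∑ q,
            (((if p = q then (1 : ℂ) else 0) * (if a = b then (1 : ℂ) else 0))) *
              ((starRingEnd ℂ) (ρ u (ζ a) (ζ b)) * ρ v (ζ p) (ζ q)) := by
        simp only [completeness ζ ξ hortho hspan]
    _ = (∑ a, (starRingEnd ℂ) (ρ u (ζ a) (ζ a))) * (∑ p, ρ v (ζ p) (ζ p)) := by
        rw [Finset.sum_mul_sum]
        refine Finset.sum_congr rfl fun a _ => ?_
        rw [Finset.sum_comm]
        refine Finset.sum_congr rfl fun p _ => ?_
        simp [ite_mul, zero_mul, one_mul, Finset.sum_ite_eq]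
    _ = (starRingEnd ℂ) (∑ l, ρ u (ζ l) (ζ l)) * (∑ l, ρ v (ζ l) (ζ l)) := by
        rw [map_sum]


end Stmt13Aux

/-- Gluing identity for probability maps (finite dimensions).
The boundary space `H₁ ⊗ H ⊗ H*` is encoded by a map `ρ` linear in the `H₁`- and
`H`-slots and conjugate-linear in the slot corresponding to `H*` (a dual vector `χ^*`
corresponds to `χ`).  With `ρ₁(ψ) = Σ_l ρ(ψ ⊗ ζ_l ⊗ ζ_l^*)`, a self-adjoint `σ` on `H₁`,
and `(ξ_j)` an orthonormal basis of the real Hilbert space of self-adjoint operators on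
`H` with the Hilbert–Schmidt inner product, the probability maps satisfy
`A_{ρ₁}(σ) = Σ_j A_ρ(σ ⊗ ξ_j ⊗ ξ_j')` (the right-hand `A_ρ` being computed in the
product orthonormal basis, and `ξ_j' (χ^*) = (ξ_j χ)^*` for self-adjoint `ξ_j`). -/
theorem stmt13 (H₁ H : Type*)
    [NormedAddCommGroup H₁] [InnerProductSpace ℂ H₁] [FiniteDimensional ℂ H₁]
    [NormedAddCommGroup H] [InnerProductSpace ℂ H] [FiniteDimensional ℂ H]
    (ι₁ ι : Type*) [Fintype ι₁] [Fintype ι]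
    (e : OrthonormalBasis ι₁ ℂ H₁) (ζ : OrthonormalBasis ι ℂ H)
    (ρ : H₁ →ₗ[ℂ] H →ₗ[ℂ] (H →ₛₗ[starRingEnd ℂ] ℂ))
    (σ : H₁ →ₗ[ℂ] H₁) (hσ : LinearMap.IsSymmetric σ)
    (J : Type*) [Fintype J] [DecidableEq J] (ξ : J → (H →ₗ[ℂ] H))
    (hξsa : ∀ j, (ξ j).IsSymmetric)
    (hortho : ∀ j j' : J,
      LinearMap.trace ℂ H (ξ j ∘ₗ ξ j') = if j = j' then (1 : ℂ) else 0)
    (hspan : ∀ T : H →ₗ[ℂ] H, T.IsSymmetric → T ∈ Submodule.span ℝ (Set.range ξ)) :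
    (∑ k : ι₁, (starRingEnd ℂ) (∑ l : ι, ρ (e k) (ζ l) (ζ l)) *
        (∑ l : ι, ρ (σ (e k)) (ζ l) (ζ l))) =
      ∑ j : J, ∑ k : ι₁, ∑ a : ι, ∑ b : ι,
        (starRingEnd ℂ) (ρ (e k) (ζ a) (ζ b)) *
          ρ (σ (e k)) (ξ j (ζ a)) (ξ j (ζ b)) := by
  classical
  rw [Finset.sum_comm]
  exact Finset.sum_congr rfl fun k _ =>
    Stmt13Aux.perk ζ ξ ρ hξsa hortho hspan (e k) (σ (e k))
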